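/- Let $f : U \times V \to \mathbb{R}$ be continuous with $V$ compact, and suppose for each $u$ the maximizer $\hat v(u)$ of $v \mapsto f(u,v)$ is unique, and $f$ has a continuous partial derivative $\nabla_u f$. Then $\Phi(u) = \max_{v \in V} f(u,v)$ is directionally differentiable at every $u$ with $D_y \Phi(u) = \langle \nabla_u f(u, \hat v(u)), y \rangle$ for every direction $y$ (Danskin's theorem, singleton case). -/

import Mathlib

open scoped RealInnerProductSpace Topology

/-- Danskin's theorem (singleton case): if the maximizer `v̂(u)` of `v ↦ f(u,v)` over
a compact set `V` is unique and `f` has a (jointly continuous) gradient in `u`,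
then `Φ(u) = max_{v ∈ V} f(u,v)` is directionally differentiable with
`D_y Φ(u) = ⟪∇_u f(u, v̂(u)), y⟫`. -/
theorem stmt17 {n m : ℕ}
    (Uset : Set (EuclideanSpace ℝ (Fin n))) (hU : IsOpen Uset)
    (Vset : Set (EuclideanSpace ℝ (Fin m))) (hVc : IsCompact Vset) (hVne : Vset.Nonempty)
    (f : EuclideanSpace ℝ (Fin n) → EuclideanSpace ℝ (Fin m) → ℝ)
    (hf : ContinuousOn (fun p : EuclideanSpace ℝ (Fin n) × EuclideanSpace ℝ (Fin m) =>
      f p.1 p.2) (Uset ×ˢ Vset))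
    (G : EuclideanSpace ℝ (Fin n) → EuclideanSpace ℝ (Fin m) → EuclideanSpace ℝ (Fin n))
    (hG : ∀ u ∈ Uset, ∀ v ∈ Vset, HasGradientAt (fun u' => f u' v) (G u v) u)
    (hGcont : ContinuousOn (fun p : EuclideanSpace ℝ (Fin n) × EuclideanSpace ℝ (Fin m) =>
      G p.1 p.2) (Uset ×ˢ Vset))
    (vhat : EuclideanSpace ℝ (Fin n) → EuclideanSpace ℝ (Fin m))
    (hvhat_mem : ∀ u ∈ Uset, vhat u ∈ Vset)
    (hvhat_max : ∀ u ∈ Uset, ∀ v ∈ Vset, f u v ≤ f u (vhat u))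
    (hvhat_unique : ∀ u ∈ Uset, ∀ v ∈ Vset, f u v = f u (vhat u) → v = vhat u)
    (Φ : EuclideanSpace ℝ (Fin n) → ℝ)
    (hΦ : ∀ u, Φ u = sSup ((fun v => f u v) '' Vset)) :
    ∀ u ∈ Uset, ∀ y : EuclideanSpace ℝ (Fin n),
      Filter.Tendsto (fun t : ℝ => (Φ (u + t • y) - Φ u) / t)
        (𝓝[>] (0 : ℝ)) (𝓝 ⟪G u (vhat u), y⟫) := by
  intro u hu y
  obtain ⟨r, hr, hball⟩ := Metric.isOpen_iff.1 hU u hu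
  have hy1 : (0:ℝ) < ‖y‖ + 1 := by positivity
  set ε₀ : ℝ := r / (‖y‖ + 1) with hε₀def
  have hε₀ : 0 < ε₀ := div_pos hr hy1
  have hmem : ∀ s : ℝ, 0 ≤ s → s ≤ ε₀ → u + s • y ∈ Uset := by
    intro s h0 h1
    apply hball
    rw [Metric.mem_ball, dist_eq_norm]
    have hns : ‖u + s • y - u‖ = s * ‖y‖ := by
      rw [add_sub_cancel_left, norm_smul, Real.norm_of_nonneg h0]
    rw [hns]
    calc s * ‖y‖ ≤ ε₀ * ‖y‖ := mul_le_mul_of_nonneg_right h1 (norm_nonneg y)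
      _ < ε₀ * (‖y‖ + 1) := by nlinarith
      _ = r := by rw [hε₀def, div_mul_cancel₀ r hy1.ne']
  -- Φ equals value at the maximizer
  have hGreat : ∀ u' ∈ Uset, IsGreatest ((fun v => f u' v) '' Vset) (f u' (vhat u')) :=
    fun u' hu' => ⟨⟨vhat u', hvhat_mem u' hu', rfl⟩, by
      rintro x ⟨v, hv, rfl⟩; exact hvhat_max u' hu' v hv⟩
  have hΦval : ∀ u' ∈ Uset, Φ u' = f u' (vhat u') := fun u' hu' => by
    rw [hΦ]; exact (hGreat u' hu').csSup_eq
  have hΦge : ∀ u' ∈ Uset, ∀ v ∈ Vset, f u' v ≤ Φ u' := fun u' hu' v hv => by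
    rw [hΦval u' hu']; exact hvhat_max u' hu' v hv
  -- derivative along the ray
  have hline : ∀ t : ℝ, HasDerivAt (fun s : ℝ => u + s • y) y t := by
    intro t
    simpa using ((hasDerivAt_id t).smul_const y).const_add u
  have hDeriv : ∀ v ∈ Vset, ∀ s : ℝ, 0 ≤ s → s ≤ ε₀ →
      HasDerivAt (fun s' : ℝ => f (u + s' • y) v) ⟪G (u + s • y) v, y⟫ s := by
    intro v hv s h0 h1
    have h1' := (hG _ (hmem s h0 h1) v hv).hasFDerivAt
    have h2 := h1'.comp_hasDerivAt s (hline s)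
    simpa [InnerProductSpace.toDual_apply_apply, Function.comp_def] using h2
  have hlow : HasDerivAt (fun t : ℝ => f (u + t • y) (vhat u)) ⟪G u (vhat u), y⟫ 0 := by
    have := hDeriv (vhat u) (hvhat_mem u hu) 0 le_rfl hε₀.le
    simpa using this
  have hlowT : Filter.Tendsto (fun t : ℝ => (f (u + t • y) (vhat u) - f u (vhat u)) / t)
      (𝓝[>] (0:ℝ)) (𝓝 ⟪G u (vhat u), y⟫) := by
    have h1 := hasDerivAt_iff_tendsto_slope.1 hlow
    have h2 := h1.mono_left (nhdsWithin_mono 0 (fun x hx => ne_of_gt hx))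
    refine h2.congr fun t => ?_
    simp [slope_def_field]
  -- continuity of the maximizer along the ray
  have hvcont : Filter.Tendsto (fun t : ℝ => vhat (u + t • y)) (𝓝[>] (0:ℝ)) (𝓝 (vhat u)) := by
    apply Filter.tendsto_of_subseq_tendsto
    intro ns hns
    have hns0 : Filter.Tendsto ns Filter.atTop (𝓝 0) := hns.mono_right nhdsWithin_le_nhds
    have hnspos : ∀ᶠ k in Filter.atTop, ns k ∈ Set.Ioi (0:ℝ) :=
      hns.eventually_mem self_mem_nhdsWithin
    have hnslt : ∀ᶠ k in Filter.atTop, ns k < ε₀ := hns0.eventually (gt_mem_nhds hε₀)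
    set τ : ℕ → ℝ := fun k => max 0 (min (ns k) ε₀) with hτdef
    have hτ0 : ∀ k, 0 ≤ τ k := fun k => le_max_left _ _
    have hτε : ∀ k, τ k ≤ ε₀ := fun k => max_le hε₀.le (min_le_right _ _)
    have hτeq : ∀ᶠ k in Filter.atTop, τ k = ns k := by
      filter_upwards [hnspos, hnslt] with k h1 h2
      simp [hτdef, min_eq_left h2.le, max_eq_right (le_of_lt (Set.mem_Ioi.mp h1))]
    have hτtend : Filter.Tendsto τ Filter.atTop (𝓝 0) :=
      hns0.congr' (hτeq.mono fun k h => h.symm)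
    have haU : ∀ k, u + τ k • y ∈ Uset := fun k => hmem _ (hτ0 k) (hτε k)
    have hatend : Filter.Tendsto (fun k => u + τ k • y) Filter.atTop (𝓝 u) := by
      have := (hτtend.smul_const y).const_add u
      simpa using this
    obtain ⟨vstar, hvstarV, φ, hφ, hwφ⟩ :=
      hVc.tendsto_subseq (x := fun k => vhat (u + τ k • y)) (fun k => hvhat_mem _ (haU k))
    have haφ : Filter.Tendsto (fun k => u + τ (φ k) • y) Filter.atTop (𝓝 u) :=
      hatend.comp hφ.tendsto_atTop
    have hp1 : Filter.Tendsto
        (fun k => ((u + τ (φ k) • y, vhat (u + τ (φ k) • y)) :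
          EuclideanSpace ℝ (Fin n) × EuclideanSpace ℝ (Fin m)))
        Filter.atTop (𝓝 (u, vstar)) := haφ.prodMk_nhds hwφ
    have hp2 : Filter.Tendsto
        (fun k => ((u + τ (φ k) • y, vhat u) :
          EuclideanSpace ℝ (Fin n) × EuclideanSpace ℝ (Fin m)))
        Filter.atTop (𝓝 (u, vhat u)) := haφ.prodMk_nhds tendsto_const_nhds
    have hc1 : Filter.Tendsto (fun k => f (u + τ (φ k) • y) (vhat (u + τ (φ k) • y)))
        Filter.atTop (𝓝 (f u vstar)) := by
      have hcw : ContinuousWithinAt (fun p : EuclideanSpace ℝ (Fin n) × EuclideanSpace ℝ (Fin m) =>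
          f p.1 p.2) (Uset ×ˢ Vset) (u, vstar) := hf _ ⟨hu, hvstarV⟩
      exact hcw.tendsto.comp (tendsto_nhdsWithin_of_tendsto_nhds_of_eventually_within _ hp1
        (Filter.Eventually.of_forall fun k => ⟨haU (φ k), hvhat_mem _ (haU (φ k))⟩))
    have hc2 : Filter.Tendsto (fun k => f (u + τ (φ k) • y) (vhat u))
        Filter.atTop (𝓝 (f u (vhat u))) := by
      have hcw : ContinuousWithinAt (fun p : EuclideanSpace ℝ (Fin n) × EuclideanSpace ℝ (Fin m) =>
          f p.1 p.2) (Uset ×ˢ Vset) (u, vhat u) := hf _ ⟨hu, hvhat_mem u hu⟩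
      exact hcw.tendsto.comp (tendsto_nhdsWithin_of_tendsto_nhds_of_eventually_within _ hp2
        (Filter.Eventually.of_forall fun k => ⟨haU (φ k), hvhat_mem u hu⟩))
    have hineq : ∀ k, f (u + τ (φ k) • y) (vhat u) ≤ f (u + τ (φ k) • y) (vhat (u + τ (φ k) • y)) :=
      fun k => hvhat_max _ (haU (φ k)) _ (hvhat_mem u hu)
    have hle : f u (vhat u) ≤ f u vstar := le_of_tendsto_of_tendsto' hc2 hc1 hineq
    have heq : f u vstar = f u (vhat u) := le_antisymm (hvhat_max u hu vstar hvstarV) hle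
    have hvs : vstar = vhat u := hvhat_unique u hu vstar hvstarV heq
    refine ⟨φ, ?_⟩
    have hwφ' : Filter.Tendsto (fun k => vhat (u + τ (φ k) • y)) Filter.atTop (𝓝 (vhat u)) := by
      rw [← hvs]; exact hwφ
    refine hwφ'.congr' ?_
    filter_upwards [hφ.tendsto_atTop.eventually hτeq] with k h
    rw [h]
  -- upper bound via mean value theorem
  have hupper : ∀ ε > (0:ℝ), ∀ᶠ t in 𝓝[>] (0:ℝ),
      (Φ (u + t • y) - Φ u) / t ≤ ⟪G u (vhat u), y⟫ + ε := by
    intro ε hε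
    have hcw : ContinuousWithinAt
        (fun p : EuclideanSpace ℝ (Fin n) × EuclideanSpace ℝ (Fin m) => ⟪G p.1 p.2, y⟫)
        (Uset ×ˢ Vset) (u, vhat u) :=
      (hGcont _ ⟨hu, hvhat_mem u hu⟩).inner continuousWithinAt_const
    obtain ⟨δ, hδ, hδball⟩ := Metric.continuousWithinAt_iff.1 hcw ε hε
    have hδy : (0:ℝ) < δ / (‖y‖ + 1) := div_pos hδ hy1
    have hvsmall : ∀ᶠ t in 𝓝[>] (0:ℝ), dist (vhat (u + t • y)) (vhat u) < δ :=
      hvcont (Metric.ball_mem_nhds _ hδ)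
    have htpos : ∀ᶠ t in 𝓝[>] (0:ℝ), (0:ℝ) < t := self_mem_nhdsWithin
    have htlt : ∀ᶠ t in 𝓝[>] (0:ℝ), t < min ε₀ (δ / (‖y‖ + 1)) :=
      (nhdsWithin_le_nhds (gt_mem_nhds (lt_min hε₀ hδy)) : _)
    filter_upwards [hvsmall, htpos, htlt] with t hvδ ht0 htsmall
    have htε₀ : t ≤ ε₀ := (lt_of_lt_of_le htsmall (min_le_left _ _)).le
    have htδ : t < δ / (‖y‖ + 1) := lt_of_lt_of_le htsmall (min_le_right _ _)
    set vt := vhat (u + t • y) with hvtdef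
    have hvtV : vt ∈ Vset := hvhat_mem _ (hmem t ht0.le htε₀)
    -- mean value theorem on [0, t]
    have hderivs : ∀ s ∈ Set.Ioo (0:ℝ) t,
        HasDerivAt (fun s' : ℝ => f (u + s' • y) vt) ⟪G (u + s • y) vt, y⟫ s :=
      fun s hs => hDeriv vt hvtV s hs.1.le (hs.2.le.trans htε₀)
    have hcontOn : ContinuousOn (fun s' : ℝ => f (u + s' • y) vt) (Set.Icc 0 t) := by
      intro s hs
      exact (hDeriv vt hvtV s hs.1 (hs.2.trans htε₀)).continuousAt.continuousWithinAt
    obtain ⟨c, hc, hceq⟩ := exists_hasDerivAt_eq_slope (fun s' : ℝ => f (u + s' • y) vt)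
      (fun s => ⟪G (u + s • y) vt, y⟫) ht0 hcontOn hderivs
    -- the intermediate point is close to (u, vhat u)
    have hcU : u + c • y ∈ Uset := hmem c hc.1.le ((hc.2.le.trans htε₀))
    have hdist : dist ((u + c • y, vt) :
        EuclideanSpace ℝ (Fin n) × EuclideanSpace ℝ (Fin m)) (u, vhat u) < δ := by
      rw [Prod.dist_eq]
      apply max_lt _ hvδ
      rw [dist_eq_norm]
      have : ‖u + c • y - u‖ = c * ‖y‖ := by
        rw [add_sub_cancel_left, norm_smul, Real.norm_of_nonneg hc.1.le]
      rw [this]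
      calc c * ‖y‖ < (δ / (‖y‖ + 1)) * (‖y‖ + 1) := by
            have h1 : c < δ / (‖y‖ + 1) := hc.2.trans htδ
            nlinarith [norm_nonneg y, hc.1]
        _ = δ := div_mul_cancel₀ δ hy1.ne'
    have hGbound : ⟪G (u + c • y) vt, y⟫ < ⟪G u (vhat u), y⟫ + ε := by
      have := hδball ⟨hcU, hvtV⟩ hdist
      rw [Real.dist_eq] at this
      have := abs_lt.1 this
      linarith [this.1, this.2]
    have hnum : Φ (u + t • y) - Φ u ≤ f (u + t • y) vt - f (u + (0:ℝ) • y) vt := by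
      have h1 : Φ (u + t • y) = f (u + t • y) vt := hΦval _ (hmem t ht0.le htε₀)
      have h2 : f (u + (0:ℝ) • y) vt ≤ Φ u := by
        simpa using hΦge u hu vt hvtV
      linarith
    calc (Φ (u + t • y) - Φ u) / t ≤ (f (u + t • y) vt - f (u + (0:ℝ) • y) vt) / t := by
          gcongr
      _ = ⟪G (u + c • y) vt, y⟫ := by rw [sub_zero] at hceq; exact hceq.symm
      _ ≤ ⟪G u (vhat u), y⟫ + ε := hGbound.le
  -- lower bound
  have hlower : ∀ᶠ t in 𝓝[>] (0:ℝ),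
      (f (u + t • y) (vhat u) - f u (vhat u)) / t ≤ (Φ (u + t • y) - Φ u) / t := by
    have htpos : ∀ᶠ t in 𝓝[>] (0:ℝ), (0:ℝ) < t := self_mem_nhdsWithin
    have htlt : ∀ᶠ t in 𝓝[>] (0:ℝ), t < ε₀ :=
      (nhdsWithin_le_nhds (gt_mem_nhds hε₀) : _)
    filter_upwards [htpos, htlt] with t ht0 htε₀
    have h1 : f (u + t • y) (vhat u) ≤ Φ (u + t • y) :=
      hΦge _ (hmem t ht0.le htε₀.le) _ (hvhat_mem u hu)
    have h2 : Φ u = f u (vhat u) := hΦval u hu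
    gcongr
    linarith
  -- conclude
  rw [tendsto_order]
  constructor
  · intro c hc
    filter_upwards [hlower, hlowT.eventually (eventually_gt_nhds hc)] with t h1 h2
    exact lt_of_lt_of_le h2 h1
  · intro c hc
    have hε2 : (0:ℝ) < (c - ⟪G u (vhat u), y⟫) / 2 := by linarith
    filter_upwards [hupper _ hε2] with t ht
    calc (Φ (u + t • y) - Φ u) / t ≤ ⟪G u (vhat u), y⟫ + (c - ⟪G u (vhat u), y⟫) / 2 := ht
      _ < c := by linarith
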